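/- Let X₁, …, X_N be i.i.d. real random variables supported on [0, B] with B > 0. Then with probability at least 1 − δ, the sum ∑_{i=1}^N X_i ≤ 2·∑_{i=1}^N E[X_i] + B·log(1/δ). -/

import Mathlib

open MeasureTheory ProbabilityTheory

/-- For `N` i.i.d. random variables supported on `[0, B]` with `B > 0` and `δ ∈ (0,1)`,
with probability at least `1 - δ` we have `∑ Xᵢ ≤ 2 ∑ E[Xᵢ] + B log (1/δ)`. -/
theorem stmt_1 {Ω : Type*} [MeasurableSpace Ω] (P : Measure Ω) [IsProbabilityMeasure P]
    (N : ℕ) (B δ : ℝ) (hB : 0 < B) (hδ : δ ∈ Set.Ioo (0 : ℝ) 1)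
    (X : Fin N → Ω → ℝ) (hmeas : ∀ i, Measurable (X i))
    (hindep : iIndepFun X P)
    (hident : ∀ i j, IdentDistrib (X i) (X j) P P)
    (hsupp : ∀ i, ∀ᵐ ω ∂P, X i ω ∈ Set.Icc (0 : ℝ) B) :
    ENNReal.ofReal (1 - δ) ≤
      P {ω | ∑ i, X i ω ≤ 2 * ∑ i, (∫ ω', X i ω' ∂P) + B * Real.log (1 / δ)} := by
  obtain ⟨hδ0, hδ1⟩ := hδ
  set t : ℝ := 1 / B with ht_def
  have ht : 0 < t := by positivity
  set μ : Fin N → ℝ := fun i => ∫ ω', X i ω' ∂P with hμ_def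
  set ε : ℝ := 2 * ∑ i, μ i + B * Real.log (1 / δ) with hε_def
  set S : Ω → ℝ := ∑ i, X i with hS_def
  have hSapp : ∀ ω, S ω = ∑ i, X i ω := fun ω => by simp [hS_def]
  have hμ0 : ∀ i, 0 ≤ μ i := fun i =>
    integral_nonneg_of_ae ((hsupp i).mono fun ω h => h.1)
  -- integrability of exp(t * X i)
  have hint : ∀ i, Integrable (fun ω => Real.exp (t * X i ω)) P := by
    intro i
    refine ⟨((hmeas i).const_mul t).exp.aestronglyMeasurable,
      MeasureTheory.HasFiniteIntegral.of_bounded (C := Real.exp (t * B)) ?_⟩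
    filter_upwards [hsupp i] with ω hω
    rw [Real.norm_eq_abs, abs_of_pos (Real.exp_pos _), Real.exp_le_exp]
    exact mul_le_mul_of_nonneg_left hω.2 ht.le
  -- integrability of X i
  have hintX : ∀ i, Integrable (X i) P := by
    intro i
    refine ⟨(hmeas i).aestronglyMeasurable,
      MeasureTheory.HasFiniteIntegral.of_bounded (C := B) ?_⟩
    filter_upwards [hsupp i] with ω hω
    rw [Real.norm_eq_abs, abs_of_nonneg hω.1]; exact hω.2
  -- mgf of each X i bounded by exp (2 t μ i)
  have hmgf : ∀ i, mgf (X i) P t ≤ Real.exp (2 * t * μ i) := by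
    intro i
    have step1 : mgf (X i) P t ≤ ∫ ω, (1 + 2 * t * X i ω) ∂P := by
      refine integral_mono_ae (hint i) ((integrable_const 1).add
        (((hintX i).const_mul (2 * t)))) ?_
      filter_upwards [hsupp i] with ω hω
      -- exp (t * x) ≤ 1 + 2 t x  for x ∈ [0, B], t = 1/B
      have hu0 : 0 ≤ t * X i ω := mul_nonneg ht.le hω.1
      have hu1 : t * X i ω ≤ 1 := by
        rw [ht_def]
        calc 1 / B * X i ω ≤ 1 / B * B := by
              exact mul_le_mul_of_nonneg_left hω.2 (by positivity)
          _ = 1 := by field_simp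
      -- convexity: exp u ≤ 1 + (e-1) u ≤ 1 + 2u on [0,1]
      have hconv : Real.exp (t * X i ω) ≤ 1 + (Real.exp 1 - 1) * (t * X i ω) := by
        have := convexOn_exp.2 (Set.mem_univ (0:ℝ)) (Set.mem_univ (1:ℝ))
          (by linarith : (0:ℝ) ≤ 1 - t * X i ω) hu0 (by ring)
        simp only [smul_eq_mul, mul_zero, mul_one, add_zero, Real.exp_zero] at this
        calc Real.exp (t * X i ω) = Real.exp ((1 - t * X i ω) * 0 + t * X i ω * 1) := by
              ring_nf
          _ ≤ (1 - t * X i ω) * 1 + t * X i ω * Real.exp 1 := by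
              simpa using this
          _ = 1 + (Real.exp 1 - 1) * (t * X i ω) := by ring
      have he : Real.exp 1 - 1 ≤ 2 := by
        have := Real.exp_one_lt_d9
        linarith
      calc Real.exp (t * X i ω) ≤ 1 + (Real.exp 1 - 1) * (t * X i ω) := hconv
        _ ≤ 1 + 2 * (t * X i ω) := by nlinarith
        _ = 1 + 2 * t * X i ω := by ring
    have step2 : ∫ ω, (1 + 2 * t * X i ω) ∂P = 1 + 2 * t * μ i := by
      rw [integral_add (integrable_const 1) ((hintX i).const_mul (2 * t)),
        integral_const, integral_const_mul]
      simp [hμ_def]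
    calc mgf (X i) P t ≤ 1 + 2 * t * μ i := by rw [← step2]; exact step1
      _ ≤ Real.exp (2 * t * μ i) := by
          have := Real.add_one_le_exp (2 * t * μ i)
          linarith
  -- mgf of sum
  have hmgfS : mgf S P t ≤ Real.exp (2 * t * ∑ i, μ i) := by
    rw [hS_def, hindep.mgf_sum hmeas]
    calc ∏ i, mgf (X i) P t ≤ ∏ i, Real.exp (2 * t * μ i) :=
          Finset.prod_le_prod (fun i _ => mgf_nonneg) (fun i _ => hmgf i)
      _ = Real.exp (∑ i, 2 * t * μ i) := by rw [Real.exp_sum]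
      _ = Real.exp (2 * t * ∑ i, μ i) := by rw [Finset.mul_sum]
  -- integrability of exp (t * S)
  have hintS : Integrable (fun ω => Real.exp (t * S ω)) P := by
    refine ⟨(((Finset.measurable_sum Finset.univ fun i _ => hmeas i).const_mul
      t).exp).aestronglyMeasurable.congr ?_,
      MeasureTheory.HasFiniteIntegral.of_bounded (C := Real.exp (t * (N * B))) ?_⟩
    · filter_upwards with ω; simp [hSapp]
    · have hall : ∀ᵐ ω ∂P, ∀ i, X i ω ∈ Set.Icc (0:ℝ) B := (MeasureTheory.ae_all_iff).2 hsupp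
      filter_upwards [hall] with ω hω
      rw [Real.norm_eq_abs, abs_of_pos (Real.exp_pos _), Real.exp_le_exp]
      refine mul_le_mul_of_nonneg_left ?_ ht.le
      rw [hSapp]
      calc ∑ i, X i ω ≤ ∑ _i : Fin N, B := Finset.sum_le_sum fun i _ => (hω i).2
        _ = N * B := by simp [mul_comm]
  -- Chernoff bound
  have chern := measure_ge_le_exp_mul_mgf (X := S) (μ := P) (t := t) ε ht.le hintS
  have hexp : Real.exp (-t * ε) * Real.exp (2 * t * ∑ i, μ i) ≤ δ := by
    rw [← Real.exp_add]
    have harg : -t * ε + 2 * t * ∑ i, μ i = Real.log δ := by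
      rw [hε_def, ht_def, one_div δ, Real.log_inv]
      field_simp
      ring
    rw [harg, Real.exp_log hδ0]
  have htail : (P {ω | ε ≤ S ω}).toReal ≤ δ := by
    calc (P {ω | ε ≤ S ω}).toReal ≤ Real.exp (-t * ε) * mgf S P t := chern
      _ ≤ Real.exp (-t * ε) * Real.exp (2 * t * ∑ i, μ i) := by
          exact mul_le_mul_of_nonneg_left hmgfS (Real.exp_pos _).le
      _ ≤ δ := hexp
  have htail' : P {ω | ε ≤ S ω} ≤ ENNReal.ofReal δ :=
    (ENNReal.le_ofReal_iff_toReal_le (measure_ne_top P _) hδ0.le).2 htail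
  -- conclude
  have hmeasS : Measurable S := by
    have hfe : S = fun ω => ∑ i, X i ω := funext hSapp
    rw [hfe]; exact Finset.measurable_sum Finset.univ fun i _ => hmeas i
  have hsubset : {ω | ε ≤ S ω}ᶜ ⊆ {ω | S ω ≤ ε} := fun ω hω => (not_le.mp (by simpa using hω)).le
  have hcompl : P {ω | ε ≤ S ω}ᶜ = 1 - P {ω | ε ≤ S ω} :=
    prob_compl_eq_one_sub (measurableSet_le measurable_const hmeasS)
  have hgoal : ENNReal.ofReal (1 - δ) ≤ P {ω | S ω ≤ ε} := by
    calc ENNReal.ofReal (1 - δ) = 1 - ENNReal.ofReal δ := by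
          rw [ENNReal.ofReal_sub 1 hδ0.le, ENNReal.ofReal_one]
      _ ≤ 1 - P {ω | ε ≤ S ω} := tsub_le_tsub_left htail' 1
      _ = P {ω | ε ≤ S ω}ᶜ := hcompl.symm
      _ ≤ P {ω | S ω ≤ ε} := measure_mono hsubset
  convert hgoal using 3 with ω
  simp [hSapp, hε_def, hμ_def]
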